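/- Let V : ℝ^m → [0,∞) be continuous, radially unbounded (V(y) → +∞ as ‖y‖ → ∞), and such that G = V^{-1}({0}) is nonempty and is the set of global minima of V. Then G is compact, and there exist continuous strictly increasing functions α₁, α₂ : [0,∞) → [0,∞) with α₁(0) = α₂(0) = 0 such that α₁(dist(y,G)) ≤ V(y) ≤ α₂(dist(y,G)) for all y ∈ ℝ^m. -/

import Mathlib

open Metric Set intervalIntegral

/-- **Class-K sandwich for a radially unbounded Lyapunov function.** If `V : ℝ^m → [0,∞)` is
continuous, radially unbounded, and `G = V⁻¹({0})` is nonempty and is the set of global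
minima of `V`, then `G` is compact and there are continuous strictly increasing functions
`α₁, α₂ : [0,∞) → [0,∞)` vanishing at `0` with
`α₁(dist(y,G)) ≤ V(y) ≤ α₂(dist(y,G))` for all `y`. -/
theorem classK_sandwich
    {m : ℕ} (V : EuclideanSpace ℝ (Fin m) → ℝ)
    (hVc : Continuous V) (hV0 : ∀ y, 0 ≤ V y)
    (hrad : ∀ C : ℝ, ∃ Rr : ℝ, ∀ y : EuclideanSpace ℝ (Fin m), Rr ≤ ‖y‖ → C ≤ V y)
    (G : Set (EuclideanSpace ℝ (Fin m)))
    (hGzero : G = V ⁻¹' {0}) (hGne : G.Nonempty)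
    (hGmin : G = {ystar | ∀ y, V ystar ≤ V y}) :
    IsCompact G ∧
    ∃ α₁ α₂ : ℝ → ℝ,
      ContinuousOn α₁ (Set.Ici 0) ∧ ContinuousOn α₂ (Set.Ici 0) ∧
      StrictMonoOn α₁ (Set.Ici 0) ∧ StrictMonoOn α₂ (Set.Ici 0) ∧
      α₁ 0 = 0 ∧ α₂ 0 = 0 ∧
      (∀ s : ℝ, 0 ≤ s → 0 ≤ α₁ s) ∧ (∀ s : ℝ, 0 ≤ s → 0 ≤ α₂ s) ∧
      ∀ y, α₁ (Metric.infDist y G) ≤ V y ∧ V y ≤ α₂ (Metric.infDist y G) := by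
  classical
  have hVG : ∀ g ∈ G, V g = 0 := by
    intro g hg; rw [hGzero] at hg; exact hg
  have hGclosed : IsClosed G := by
    rw [hGzero]; exact isClosed_singleton.preimage hVc
  obtain ⟨g₀, hg₀⟩ := hGne
  obtain ⟨R₁, hR₁⟩ := hrad 1
  have hGsub : ∀ g ∈ G, ‖g‖ < R₁ := by
    intro g hg
    by_contra h
    have := hR₁ g (le_of_not_gt h)
    rw [hVG g hg] at this; linarith
  have hGb : Bornology.IsBounded G :=
    Metric.isBounded_ball.subset (fun g hg => by
      rw [Metric.mem_ball, dist_zero_right]; exact hGsub g hg)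
  have hGc : IsCompact G := Metric.isCompact_of_isClosed_isBounded hGclosed hGb
  refine ⟨hGc, ?_⟩
  set d : EuclideanSpace ℝ (Fin m) → ℝ := fun y => Metric.infDist y G with hd
  have hdc : Continuous d := Metric.continuous_infDist_pt G
  have hd0 : ∀ y, 0 ≤ d y := fun y => Metric.infDist_nonneg
  have hdG : ∀ y, d y = 0 ↔ y ∈ G := fun y =>
    (hGclosed.mem_iff_infDist_zero ⟨g₀, hg₀⟩).symm
  have hVpos : ∀ y, y ∉ G → 0 < V y := by
    intro y hy
    rcases lt_or_eq_of_le (hV0 y) with h | h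
    · exact h
    · exact absurd (by rw [hGzero]; exact Set.mem_preimage.2 (by simp [← h])) hy
  by_cases hsub : ∀ y : EuclideanSpace ℝ (Fin m), y ∈ G
  · -- degenerate case: V ≡ 0, d ≡ 0
    refine ⟨id, id, continuousOn_id, continuousOn_id,
      strictMono_id.strictMonoOn _, strictMono_id.strictMonoOn _, rfl, rfl,
      fun s hs => hs, fun s hs => hs, fun y => ?_⟩
    have hdy : d y = 0 := Metric.infDist_zero_of_mem (hsub y)
    have hVy : V y = 0 := hVG y (hsub y)
    constructor
    · show d y ≤ V y; rw [hdy, hVy]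
    · show V y ≤ d y; rw [hdy, hVy]
  -- main case
  push_neg at hsub
  obtain ⟨y₀, hy₀⟩ := hsub
  have hm : 0 < m := by
    rcases Nat.eq_zero_or_pos m with h | h
    · exfalso
      apply hy₀
      have : y₀ = g₀ := by
        ext i
        exact absurd i.2 (by omega)
      rw [this]; exact hg₀
    · exact h
  -- the far sets are nonempty
  set S : ℝ → Set (EuclideanSpace ℝ (Fin m)) := fun r => {y | r ≤ d y} with hS
  have hSne : ∀ r : ℝ, (S r).Nonempty := by
    intro r
    set cst : ℝ := max R₁ 0 + max r 0 with hcst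
    refine ⟨EuclideanSpace.single ⟨0, hm⟩ cst, ?_⟩
    have hnorm : ‖EuclideanSpace.single (⟨0, hm⟩ : Fin m) cst‖ = cst := by
      rw [EuclideanSpace.norm_single, Real.norm_eq_abs, abs_of_nonneg]
      positivity
    show r ≤ d _
    by_contra h
    push_neg at h
    obtain ⟨g, hgG, hgd⟩ := (Metric.infDist_lt_iff ⟨g₀, hg₀⟩).1 h
    have h1 : ‖EuclideanSpace.single (⟨0, hm⟩ : Fin m) cst‖ ≤
        dist (EuclideanSpace.single (⟨0, hm⟩ : Fin m) cst) g + ‖g‖ := by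
      have := dist_triangle (EuclideanSpace.single (⟨0, hm⟩ : Fin m) cst) g 0
      simpa [dist_zero_right] using this
    have h2 := hGsub g hgG
    have h3 : cst ≥ R₁ + r := add_le_add (le_max_left _ _) (le_max_left _ _)
    rw [hnorm] at h1
    linarith
  -- the lower envelope c
  set c : ℝ → ℝ := fun r => sInf (V '' S r) with hc
  have hc_bdd : ∀ r, BddBelow (V '' S r) := by
    intro r; exact ⟨0, by rintro _ ⟨y, _, rfl⟩; exact hV0 y⟩
  have hc_nonneg : ∀ r, 0 ≤ c r := by
    intro r
    exact le_csInf ((hSne r).image V) (by rintro _ ⟨y, _, rfl⟩; exact hV0 y)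
  have hc_mono : Monotone c := by
    intro r r' h
    exact csInf_le_csInf (hc_bdd r) ((hSne r').image V)
      (Set.image_mono (fun y hy => le_trans h hy))
  have hc_le : ∀ y, c (d y) ≤ V y := by
    intro y
    exact csInf_le (hc_bdd _) ⟨y, show d y ≤ d y from le_rfl, rfl⟩
  have hc_pos : ∀ r, 0 < r → 0 < c r := by
    intro r hr
    have hSclosed : IsClosed (S r) := isClosed_le continuous_const hdc
    set A := S r ∩ Metric.closedBall 0 R₁ with hA
    have hAc : IsCompact A :=
      (isCompact_closedBall (0 : EuclideanSpace ℝ (Fin m)) R₁).inter_left hSclosed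
    have key : ∃ ε : ℝ, 0 < ε ∧ ∀ y ∈ S r, ε ≤ V y := by
      rcases A.eq_empty_or_nonempty with hAe | hAne
      · refine ⟨1, one_pos, fun y hy => ?_⟩
        apply hR₁
        by_contra h
        push_neg at h
        exact (Set.eq_empty_iff_forall_notMem.1 hAe y)
          ⟨hy, by rw [Metric.mem_closedBall, dist_zero_right]; linarith⟩
      · obtain ⟨y₁, hy₁A, hy₁min⟩ := hAc.exists_isMinOn hAne hVc.continuousOn
        have hy₁pos : 0 < V y₁ := by
          apply hVpos
          intro hy₁G
          have : d y₁ = 0 := Metric.infDist_zero_of_mem hy₁G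
          have := hy₁A.1
          simp only [hS, Set.mem_setOf_eq] at this
          linarith
        refine ⟨min 1 (V y₁), lt_min one_pos hy₁pos, fun y hy => ?_⟩
        by_cases hy' : ‖y‖ ≤ R₁
        · exact le_trans (min_le_right _ _)
            (hy₁min ⟨hy, by rw [Metric.mem_closedBall, dist_zero_right]; exact hy'⟩)
        · exact le_trans (min_le_left _ _) (hR₁ y (by linarith [not_le.1 hy']))
    obtain ⟨ε, hεpos, hε⟩ := key
    exact lt_of_lt_of_le hεpos
      (le_csInf ((hSne r).image V) (by rintro _ ⟨y, hy, rfl⟩; exact hε y hy))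
  -- f = min (c, id)
  set f : ℝ → ℝ := fun r => min (c r) r with hf
  have hf_mono : Monotone f := fun a b h => min_le_min (hc_mono h) h
  have hf_nonneg : ∀ r, 0 ≤ r → 0 ≤ f r := fun r hr => le_min (hc_nonneg r) hr
  have hf_pos : ∀ r, 0 < r → 0 < f r := fun r hr => lt_min (hc_pos r hr) hr
  have hf_le_id : ∀ r, f r ≤ r := fun r => min_le_right _ _
  have hf_le_c : ∀ r, f r ≤ c r := fun r => min_le_left _ _
  have hf_int : ∀ a b : ℝ, IntervalIntegrable f MeasureTheory.volume a b :=
    fun a b => hf_mono.intervalIntegrable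
  set F : ℝ → ℝ := fun r => ∫ s in (0:ℝ)..r, f s with hF
  have hFc : Continuous F := intervalIntegral.continuous_primitive hf_int 0
  have hF_upper : ∀ a b : ℝ, a ≤ b → (∫ s in a..b, f s) ≤ (b - a) * f b := by
    intro a b hab
    calc (∫ s in a..b, f s) ≤ ∫ _s in a..b, f b :=
          integral_mono_on hab (hf_int a b) intervalIntegrable_const
            (fun x hx => hf_mono hx.2)
      _ = (b - a) * f b := by simp [smul_eq_mul]
  have hF_lower : ∀ a b : ℝ, a ≤ b → (b - a) * f a ≤ ∫ s in a..b, f s := by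
    intro a b hab
    calc (b - a) * f a = ∫ _s in a..b, f a := by simp [smul_eq_mul]
      _ ≤ ∫ s in a..b, f s :=
          integral_mono_on hab intervalIntegrable_const (hf_int a b)
            (fun x hx => hf_mono hx.1)
  set α₁ : ℝ → ℝ := fun r => F r / r with hα₁
  have hα₁0 : α₁ 0 = 0 := by simp [hα₁, hF]
  have hα₁_le_f : ∀ r, 0 ≤ r → α₁ r ≤ f r := by
    intro r hr
    rcases eq_or_lt_of_le hr with h | h
    · rw [← h, hα₁0]; exact hf_nonneg 0 le_rfl
    · rw [div_le_iff₀ h]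
      have := hF_upper 0 r hr
      simp only [sub_zero] at this
      linarith [this, mul_comm (f r) r]
  have hα₁_nonneg : ∀ r, 0 ≤ r → 0 ≤ α₁ r := by
    intro r hr
    exact div_nonneg (integral_nonneg hr (fun u hu => hf_nonneg u hu.1)) hr
  have hFsplit : ∀ a b c' : ℝ, F b = F a + ∫ s in a..b, f s := by
    intro a b _
    rw [hF]
    exact (integral_add_adjacent_intervals (hf_int 0 a) (hf_int a b)).symm
  have hα₁_pos : ∀ r, 0 < r → 0 < α₁ r := by
    intro r hr
    have h1 : F r = F (r/2) + ∫ s in (r/2)..r, f s := hFsplit (r/2) r 0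
    have h2 : (r - r/2) * f (r/2) ≤ ∫ s in (r/2)..r, f s := hF_lower (r/2) r (by linarith)
    have h3 : 0 ≤ F (r/2) := integral_nonneg (by linarith) (fun u hu => hf_nonneg u hu.1)
    have h4 : 0 < f (r/2) := hf_pos _ (by linarith)
    have : 0 < F r := by nlinarith
    exact div_pos this hr
  have hFr_lt : ∀ r, 0 < r → F r < r * f r := by
    intro r hr
    set k := f r with hk
    have hkpos : 0 < k := hf_pos r hr
    have hkr : k ≤ r := hf_le_id r
    have h1 : F r = F (k/2) + ∫ s in (k/2)..r, f s := hFsplit (k/2) r 0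
    have h2 : F (k/2) ≤ (k/2 - 0) * f (k/2) := by
      have := hF_upper 0 (k/2) (by linarith)
      simpa using this
    have h3 : f (k/2) ≤ k/2 := hf_le_id _
    have h4 : (∫ s in (k/2)..r, f s) ≤ (r - k/2) * f r := hF_upper (k/2) r (by linarith)
    have h5 : 0 ≤ f (k/2) := hf_nonneg _ (by linarith)
    nlinarith
  have hα₁_smono : StrictMonoOn α₁ (Set.Ici 0) := by
    intro a ha b _ hab
    rcases eq_or_lt_of_le (Set.mem_Ici.1 ha) with h | h
    · rw [← h, hα₁0]; exact hα₁_pos b (by rw [← h] at hab; exact hab)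
    · have hb : (0:ℝ) < b := lt_trans h hab
      show F a / a < F b / b
      rw [div_lt_div_iff₀ h hb]
      have h1 : F a < a * f a := hFr_lt a h
      have h2 : (b - a) * f a ≤ ∫ s in a..b, f s := hF_lower a b hab.le
      have h3 : F b = F a + ∫ s in a..b, f s := hFsplit a b 0
      have hfa : 0 < f a := hf_pos a h
      nlinarith
  have hα₁_cont : ContinuousOn α₁ (Set.Ici 0) := by
    intro x hx
    rcases eq_or_lt_of_le (Set.mem_Ici.1 hx) with h | h
    · rw [← h]
      have htend : Filter.Tendsto α₁ (nhdsWithin 0 (Set.Ici 0)) (nhds 0) := by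
        apply tendsto_of_tendsto_of_tendsto_of_le_of_le' tendsto_const_nhds
          (Filter.tendsto_id.mono_left nhdsWithin_le_nhds)
        · filter_upwards [self_mem_nhdsWithin] with r hr
          exact hα₁_nonneg r hr
        · filter_upwards [self_mem_nhdsWithin] with r hr
          exact le_trans (hα₁_le_f r hr) (hf_le_id r)
      show ContinuousWithinAt α₁ (Set.Ici 0) 0
      unfold ContinuousWithinAt
      rwa [hα₁0]
    · exact ((hFc.continuousAt.div continuousAt_id (ne_of_gt h))).continuousWithinAt
  -- upper envelope M
  set K : ℝ → Set (EuclideanSpace ℝ (Fin m)) := fun r => {y | d y ≤ r} with hK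
  have hK_bddA : ∀ r : ℝ, BddAbove (V '' K r) := by
    intro r
    rcases lt_or_ge r 0 with h | h
    · have : K r = ∅ := by
        ext y; simp only [hK, Set.mem_setOf_eq, Set.mem_empty_iff_false, iff_false, not_le]
        exact lt_of_lt_of_le h (hd0 y)
      rw [this]; simp
    · have hKc : IsCompact (K r) := by
        apply Metric.isCompact_of_isClosed_isBounded (isClosed_le hdc continuous_const)
        apply (Metric.isBounded_closedBall (x := (0 : EuclideanSpace ℝ (Fin m)))
          (r := R₁ + r)).subset
        intro y hy
        obtain ⟨g, hgG, hgd⟩ := hGc.exists_infDist_eq_dist ⟨g₀, hg₀⟩ y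
        rw [Metric.mem_closedBall, dist_zero_right]
        have h1 : dist y g ≤ r := by rw [← hgd]; exact hy
        have h2 : ‖y‖ ≤ dist y g + ‖g‖ := by
          rw [dist_eq_norm]
          calc ‖y‖ = ‖(y - g) + g‖ := by rw [sub_add_cancel]
            _ ≤ ‖y - g‖ + ‖g‖ := norm_add_le _ _
        linarith [hGsub g hgG]
      exact hKc.bddAbove_image hVc.continuousOn
  set M : ℝ → ℝ := fun r => sSup (V '' K r) with hM
  have hM_nonneg : ∀ r, 0 ≤ M r := by
    intro r
    rcases (V '' K r).eq_empty_or_nonempty with h | ⟨v, y, hy, rfl⟩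
    · rw [hM]; simp only [h, Real.sSup_empty]; exact le_rfl
    · exact le_trans (hV0 y) (le_csSup (hK_bddA r) ⟨y, hy, rfl⟩)
  have hM_mono : Monotone M := by
    intro r r' h
    rcases (V '' K r).eq_empty_or_nonempty with he | hne
    · show sSup (V '' K r) ≤ M r'
      rw [he, Real.sSup_empty]; exact hM_nonneg r'
    · exact csSup_le_csSup (hK_bddA r') hne
        (Set.image_mono (fun y hy => le_trans hy h))
  have hM_ge : ∀ y, V y ≤ M (d y) := by
    intro y
    exact le_csSup (hK_bddA _) ⟨y, show d y ≤ d y from le_rfl, rfl⟩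
  have hM0 : ∀ ε : ℝ, 0 < ε → ∃ δ : ℝ, 0 < δ ∧ ∀ s : ℝ, s ≤ δ → M s ≤ ε := by
    intro ε hε
    have hU : IsOpen {y : EuclideanSpace ℝ (Fin m) | V y < ε} :=
      isOpen_lt hVc continuous_const
    have hGU : G ⊆ {y | V y < ε} := fun g hg => by
      simp only [Set.mem_setOf_eq, hVG g hg]; exact hε
    obtain ⟨δ, hδpos, hδ⟩ := hGc.exists_cthickening_subset_open hU hGU
    refine ⟨δ, hδpos, fun s hs => ?_⟩
    apply Real.sSup_le _ hε.le
    rintro _ ⟨y, hy, rfl⟩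
    have hyc : y ∈ Metric.cthickening δ G := by
      rw [Metric.mem_cthickening_iff]
      refine (ENNReal.le_ofReal_iff_toReal_le (Metric.infEdist_ne_top ⟨g₀, hg₀⟩)
        hδpos.le).2 ?_
      have : d y ≤ δ := le_trans hy hs
      simpa [hd, Metric.infDist] using this
    exact (hδ hyc).le
  have hM_int : ∀ a b : ℝ, IntervalIntegrable M MeasureTheory.volume a b :=
    fun a b => hM_mono.intervalIntegrable
  set F₂ : ℝ → ℝ := fun r => ∫ s in (0:ℝ)..r, M s with hF₂
  have hF₂c : Continuous F₂ := intervalIntegral.continuous_primitive hM_int 0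
  set I : ℝ → ℝ := fun r => ∫ s in r..(2*r), M s with hI
  have hI_eq : ∀ r, I r = F₂ (2*r) - F₂ r :=
    fun r => (integral_interval_sub_left (hM_int 0 (2*r)) (hM_int 0 r)).symm
  set α₂ : ℝ → ℝ := fun r => r + I r / r with hα₂
  have hα₂0 : α₂ 0 = 0 := by
    have : I 0 = 0 := by rw [hI]; norm_num
    rw [hα₂]; simp [this]
  have hI_lower : ∀ r, 0 ≤ r → r * M r ≤ I r := by
    intro r hr
    calc r * M r = ∫ _s in r..(2*r), M r := by
          rw [integral_const, smul_eq_mul]; ring_nf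
      _ ≤ I r := integral_mono_on (by linarith) intervalIntegrable_const
          (hM_int r (2*r)) (fun x hx => hM_mono hx.1)
  have hI_upper : ∀ r, 0 ≤ r → I r ≤ r * M (2*r) := by
    intro r hr
    calc I r ≤ ∫ _s in r..(2*r), M (2*r) := integral_mono_on (by linarith)
          (hM_int r (2*r)) intervalIntegrable_const (fun x hx => hM_mono hx.2)
      _ = r * M (2*r) := by rw [integral_const, smul_eq_mul]; ring_nf
  have hI_nonneg : ∀ r, 0 ≤ r → 0 ≤ I r := by
    intro r hr
    exact integral_nonneg (by linarith) (fun u _ => hM_nonneg u)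
  have hα₂_nonneg : ∀ r, 0 ≤ r → 0 ≤ α₂ r := by
    intro r hr
    exact add_nonneg hr (div_nonneg (hI_nonneg r hr) hr)
  have hα₂_ge : ∀ y, V y ≤ α₂ (d y) := by
    intro y
    rcases eq_or_lt_of_le (hd0 y) with h | h
    · have hyG : y ∈ G := (hdG y).1 h.symm
      rw [← h, hα₂0, hVG y hyG]
    · have h1 : M (d y) ≤ I (d y) / d y := by
        rw [le_div_iff₀ h]
        have := hI_lower (d y) h.le
        linarith [mul_comm (M (d y)) (d y)]
      have := hM_ge y
      show V y ≤ d y + I (d y) / d y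
      linarith
  have hsubst : ∀ r : ℝ, 0 < r → I r / r = ∫ t in (1:ℝ)..2, M (r * t) := by
    intro r hr
    have h := intervalIntegral.integral_comp_mul_left (a := (1:ℝ)) (b := 2)
      (f := M) (c := r) (ne_of_gt hr)
    rw [h, smul_eq_mul, mul_one]
    show I r / r = r⁻¹ * ∫ x in r..(r*2), M x
    rw [show r * 2 = 2 * r from by ring]
    show I r / r = r⁻¹ * I r
    rw [div_eq_inv_mul]
  have hα₂_smono : StrictMonoOn α₂ (Set.Ici 0) := by
    intro a ha b _ hab
    rcases eq_or_lt_of_le (Set.mem_Ici.1 ha) with h | h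
    · rw [← h, hα₂0]
      have hb : (0:ℝ) < b := by rw [← h] at hab; exact hab
      have := hα₂_nonneg b hb.le
      have hIb : 0 ≤ I b / b := div_nonneg (hI_nonneg b hb.le) hb.le
      show (0:ℝ) < b + I b / b
      linarith
    · have hb : (0:ℝ) < b := lt_trans h hab
      have key : I a / a ≤ I b / b := by
        rw [hsubst a h, hsubst b hb]
        apply integral_mono_on (by norm_num)
        · exact (hM_mono.comp (fun t₁ t₂ ht => by nlinarith)).intervalIntegrable
        · exact (hM_mono.comp (fun t₁ t₂ ht => by nlinarith)).intervalIntegrable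
        · intro x hx
          exact hM_mono (mul_le_mul_of_nonneg_right hab.le (by linarith [hx.1]))
      show a + I a / a < b + I b / b
      linarith
  have hα₂_cont : ContinuousOn α₂ (Set.Ici 0) := by
    intro x hx
    rcases eq_or_lt_of_le (Set.mem_Ici.1 hx) with h | h
    · rw [← h]
      show ContinuousWithinAt α₂ (Set.Ici 0) 0
      unfold ContinuousWithinAt
      rw [hα₂0]
      rw [Metric.tendsto_nhdsWithin_nhds]
      intro ε hε
      obtain ⟨δ, hδpos, hδ⟩ := hM0 (ε/3) (by linarith)
      refine ⟨min (δ/2) (ε/3), by positivity, ?_⟩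
      intro r hr hdist
      have hr0 : 0 ≤ r := Set.mem_Ici.1 hr
      rw [Real.dist_eq, sub_zero, abs_of_nonneg hr0] at hdist
      have hrδ : r < δ/2 := lt_of_lt_of_le hdist (min_le_left _ _)
      have hrε : r < ε/3 := lt_of_lt_of_le hdist (min_le_right _ _)
      have hα₂r : α₂ r ≤ r + M (2*r) := by
        rcases eq_or_lt_of_le hr0 with h' | h'
        · rw [← h', hα₂0]
          have := hM_nonneg (2*0)
          simpa using this
        · have : I r / r ≤ M (2*r) := by
            rw [div_le_iff₀ h']
            have := hI_upper r h'.le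
            linarith [mul_comm (M (2*r)) r]
          show r + I r / r ≤ r + M (2*r)
          linarith
      have hM2r : M (2*r) ≤ ε/3 := hδ (2*r) (by linarith)
      rw [Real.dist_eq, sub_zero, abs_of_nonneg (hα₂_nonneg r hr0)]
      linarith
    · apply ContinuousAt.continuousWithinAt
      have heq : α₂ = fun r => r + (F₂ (2*r) - F₂ r) / r := by
        funext r
        show r + I r / r = r + (F₂ (2*r) - F₂ r) / r
        rw [hI_eq]
      rw [heq]
      exact continuousAt_id.add
        ((((hF₂c.comp (continuous_const.mul continuous_id)).continuousAt.sub
          hF₂c.continuousAt)).div continuousAt_id (ne_of_gt h))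
  refine ⟨α₁, α₂, hα₁_cont, hα₂_cont, hα₁_smono, hα₂_smono, hα₁0, hα₂0,
    hα₁_nonneg, hα₂_nonneg, fun y => ⟨?_, hα₂_ge y⟩⟩
  exact le_trans (hα₁_le_f (d y) (hd0 y)) (le_trans (hf_le_c (d y)) (hc_le y))
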